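/- Fix θ > 0, Δt > 0, Σ ∈ ℝ^{m×d}, A ∈ ℝ^{m×n}, a ∈ ℝ^m, Ξ ∈ ℝ^d, Λ ∈ ℝ^{n×d}, b ∈ ℝ^n, B̃ ∈ ℝ^{n×n}, a symmetric matrix P ∈ ℝ^{n×n}, p ∈ ℝ^n, a symmetric positive definite Ψ ∈ ℝ^{m×m}, and x ∈ ℝ^n. Set 𝒜 := ΛᵀPΛΔt − I_d and define F(h,γ,η) := (θ/2)(h+η)ᵀΣΣᵀ(h+η)Δt − θ(h+η)ᵀ(a+Ax)Δt − θ((h+η)ᵀΣ − Ξᵀ)γΔt + (1/2)γᵀ𝒜γΔt + γᵀΛᵀ(P(bΔt+B̃x)+p)Δt − (1/2)ηᵀΨ⁻¹η for h, η ∈ ℝ^m, γ ∈ ℝ^d. Assume ΣΣᵀ is positive definite, 𝒜 is negative definite, and Ψ⁻¹ − θΔt·Σ(I_d − θ𝒜⁻¹)Σᵀ is positive definite. Then there exists a unique triple (h*, γ*, η*) ∈ ℝ^m × ℝ^d × ℝ^m such that F(h*, γ, η) ≤ F(h*, γ*, η*) ≤ F(h, γ*, η*) for all h, η ∈ ℝ^m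 and γ ∈ ℝ^d; moreover inf over h of sup over (γ, η) of F(h,γ,η) equals sup over (γ, η) of inf over h of F(h,γ,η), and both equal F(h*, γ*, η*). -/

import Mathlib

open Matrix

/-- The control-dependent part `F` of the one-step Hamiltonian of the
relative-entropy-penalized stochastic game, with `𝒜 = ΛᵀPΛΔt − I_d`:
`F(h,γ,η) = (θ/2)(h+η)ᵀΣΣᵀ(h+η)Δt − θ(h+η)ᵀ(a+Ax)Δt − θ((h+η)ᵀΣ − Ξᵀ)γΔt
  + (1/2)γᵀ𝒜γΔt + γᵀΛᵀ(P(bΔt+B̃x)+p)Δt − (1/2)ηᵀΨ⁻¹η`. -/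
noncomputable def FFun {m n d : ℕ} (θ Δt : ℝ) (S : Matrix (Fin m) (Fin d) ℝ)
    (A : Matrix (Fin m) (Fin n) ℝ) (a : Fin m → ℝ) (Ξ : Fin d → ℝ)
    (Λ : Matrix (Fin n) (Fin d) ℝ) (b : Fin n → ℝ) (Bt : Matrix (Fin n) (Fin n) ℝ)
    (P : Matrix (Fin n) (Fin n) ℝ) (p : Fin n → ℝ) (Ψ : Matrix (Fin m) (Fin m) ℝ)
    (x : Fin n → ℝ) (h : Fin m → ℝ) (γ : Fin d → ℝ) (η : Fin m → ℝ) : ℝ :=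
  (θ / 2) * ((h + η) ⬝ᵥ ((S * Sᵀ) *ᵥ (h + η))) * Δt
    - θ * ((h + η) ⬝ᵥ (a + A *ᵥ x)) * Δt
    - θ * (((Sᵀ *ᵥ (h + η)) - Ξ) ⬝ᵥ γ) * Δt
    + (1 / 2 : ℝ) * (γ ⬝ᵥ ((Δt • (Λᵀ * P * Λ) - 1) *ᵥ γ)) * Δt
    + (γ ⬝ᵥ (Λᵀ *ᵥ (P *ᵥ (Δt • b + Bt *ᵥ x) + p))) * Δt
    - (1 / 2 : ℝ) * (η ⬝ᵥ (Ψ⁻¹ *ᵥ η))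


section helpers
variable {k l : ℕ}

lemma linquad_zero (b C : ℝ) (H : ∀ t : ℝ, t * b + t ^ 2 * C ≤ 0) : b = 0 := by
  by_contra hb
  have hb' : 0 < |b| := abs_pos.mpr hb
  have hC1 : 0 < |C| + 1 := by positivity
  have habs : ∀ s : ℝ, 0 < s → |b| ≤ s * (|C| + 1) := by
    intro s hs
    have h1 := H s
    have h2 := H (-s)
    have hCa : C ≤ |C| := le_abs_self C
    have hCb : -|C| ≤ C := neg_abs_le C
    rw [abs_le]
    constructor <;> nlinarith [sq_nonneg s]
  have := habs (|b| / (2 * (|C| + 1))) (by positivity)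
  rw [div_mul_eq_mul_div] at this
  have heq : |b| * (|C| + 1) / (2 * (|C| + 1)) = |b| / 2 := by
    field_simp
  rw [heq] at this
  linarith

lemma dot_symm {M : Matrix (Fin k) (Fin k) ℝ} (hMs : Mᵀ = M) (x y : Fin k → ℝ) :
    x ⬝ᵥ M *ᵥ y = y ⬝ᵥ M *ᵥ x := by
  rw [dotProduct_mulVec, ← mulVec_transpose, hMs, dotProduct_comm]

lemma transpose_dot (S : Matrix (Fin k) (Fin l) ℝ) (v : Fin k → ℝ) (γ : Fin l → ℝ) :
    (Sᵀ *ᵥ v) ⬝ᵥ γ = v ⬝ᵥ (S *ᵥ γ) := by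
  rw [mulVec_transpose, ← dotProduct_mulVec]

lemma pd_pos {M : Matrix (Fin k) (Fin k) ℝ} (hM : M.PosDef) {x : Fin k → ℝ} (hx : x ≠ 0) :
    0 < x ⬝ᵥ M *ᵥ x := by simpa using hM.dotProduct_mulVec_pos hx

lemma psd_nonneg {M : Matrix (Fin k) (Fin k) ℝ} (hM : M.PosSemidef) (x : Fin k → ℝ) :
    0 ≤ x ⬝ᵥ M *ᵥ x := by simpa using hM.dotProduct_mulVec_nonneg x

lemma psd_symm {M : Matrix (Fin k) (Fin k) ℝ} (hM : M.PosSemidef) : Mᵀ = M := by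
  have := hM.isHermitian
  rwa [IsHermitian, conjTranspose_eq_transpose_of_trivial] at this

lemma pd_symm {M : Matrix (Fin k) (Fin k) ℝ} (hM : M.PosDef) : Mᵀ = M :=
  psd_symm hM.posSemidef

lemma pd_smul {M : Matrix (Fin k) (Fin k) ℝ} (hM : M.PosDef) {a : ℝ} (ha : 0 < a) :
    (a • M).PosDef := by
  exact hM.smul ha

lemma psd_smul {M : Matrix (Fin k) (Fin k) ℝ} (hM : M.PosSemidef) {a : ℝ} (ha : 0 ≤ a) :
    (a • M).PosSemidef := by
  exact hM.smul ha

lemma pd_isunit_det {M : Matrix (Fin k) (Fin k) ℝ} (hM : M.PosDef) : IsUnit M.det :=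
  hM.det_pos.ne'.isUnit

lemma mulVec_cancel {M : Matrix (Fin k) (Fin k) ℝ} (h : M.PosDef) (x : Fin k → ℝ) :
    M *ᵥ (M⁻¹ *ᵥ x) = x := by
  rw [mulVec_mulVec, mul_nonsing_inv _ (pd_isunit_det h), one_mulVec]

lemma mulVec_inj {M : Matrix (Fin k) (Fin k) ℝ} (h : M.PosDef) {x y : Fin k → ℝ}
    (hxy : M *ᵥ x = M *ᵥ y) : x = y :=
  (mulVec_injective_iff_isUnit.mpr h.isUnit) hxy

end helpers

noncomputable def Gfun {m d : ℕ} (α : ℝ) (M : Matrix (Fin m) (Fin m) ℝ) (c : Fin m → ℝ)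
    (S : Matrix (Fin m) (Fin d) ℝ) (Ξ : Fin d → ℝ) (A' : Matrix (Fin d) (Fin d) ℝ)
    (w : Fin d → ℝ) (K : Matrix (Fin m) (Fin m) ℝ)
    (h : Fin m → ℝ) (γ : Fin d → ℝ) (η : Fin m → ℝ) : ℝ :=
  (α / 2) * ((h + η) ⬝ᵥ (M *ᵥ (h + η))) - α * ((h + η) ⬝ᵥ c)
    - α * (((Sᵀ *ᵥ (h + η)) - Ξ) ⬝ᵥ γ)
    + (1 / 2 : ℝ) * (γ ⬝ᵥ (A' *ᵥ γ)) + γ ⬝ᵥ w - (1 / 2 : ℝ) * (η ⬝ᵥ (K *ᵥ η))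

section expand
variable {m d : ℕ} (α : ℝ) (M : Matrix (Fin m) (Fin m) ℝ) (c : Fin m → ℝ)
    (S : Matrix (Fin m) (Fin d) ℝ) (Ξ : Fin d → ℝ) (A' : Matrix (Fin d) (Fin d) ℝ)
    (w : Fin d → ℝ) (K : Matrix (Fin m) (Fin m) ℝ)

lemma dot_symm' {k : ℕ} {M : Matrix (Fin k) (Fin k) ℝ} (hMs : Mᵀ = M) (x y : Fin k → ℝ) :
    x ⬝ᵥ M *ᵥ y = y ⬝ᵥ M *ᵥ x := by
  rw [dotProduct_mulVec, ← mulVec_transpose, hMs, dotProduct_comm]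

lemma transpose_dot' {k l : ℕ} (S : Matrix (Fin k) (Fin l) ℝ) (v : Fin k → ℝ) (γ : Fin l → ℝ) :
    (Sᵀ *ᵥ v) ⬝ᵥ γ = v ⬝ᵥ (S *ᵥ γ) := by
  rw [mulVec_transpose, ← dotProduct_mulVec]

lemma G_expand (hMs : Mᵀ = M) (hA's : A'ᵀ = A') (hKs : Kᵀ = K)
    (h : Fin m → ℝ) (γ : Fin d → ℝ) (η : Fin m → ℝ)
    (δ : Fin m → ℝ) (g : Fin d → ℝ) (e : Fin m → ℝ) :
    Gfun α M c S Ξ A' w K (h + δ) (γ + g) (η + e) =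
      Gfun α M c S Ξ A' w K h γ η
      + (δ + e) ⬝ᵥ (α • (M *ᵥ (h + η) - c - S *ᵥ γ))
      + g ⬝ᵥ (A' *ᵥ γ + w - α • (Sᵀ *ᵥ (h + η) - Ξ))
      - e ⬝ᵥ (K *ᵥ η)
      + ((α / 2) * ((δ + e) ⬝ᵥ (M *ᵥ (δ + e))) - α * (g ⬝ᵥ (Sᵀ *ᵥ (δ + e)))
          + (1 / 2 : ℝ) * (g ⬝ᵥ (A' *ᵥ g)) - (1 / 2 : ℝ) * (e ⬝ᵥ (K *ᵥ e))) := by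
  have harr : h + δ + (η + e) = (h + η) + (δ + e) := by
    funext i; simp; ring
  rw [Gfun, Gfun, harr]
  simp only [mulVec_add, mulVec_sub, mulVec_smul, dotProduct_add, add_dotProduct,
    dotProduct_sub, sub_dotProduct, dotProduct_smul, smul_dotProduct, smul_eq_mul]
  rw [dot_symm' hMs h δ, dot_symm' hMs η δ, dot_symm' hMs h e, dot_symm' hMs η e,
    dot_symm' hMs δ e, dot_symm' hA's γ g, dot_symm' hKs η e,
    transpose_dot' S δ γ, transpose_dot' S e γ,
    dotProduct_comm g (Sᵀ *ᵥ h), dotProduct_comm g (Sᵀ *ᵥ η), dotProduct_comm g Ξ,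
    dotProduct_comm g (Sᵀ *ᵥ δ), dotProduct_comm g (Sᵀ *ᵥ e)]
  ring
end expand

section main
variable {m d : ℕ}

theorem Gsaddle (α : ℝ) (hα : 0 < α)
    (M : Matrix (Fin m) (Fin m) ℝ) (hM : M.PosDef)
    (c : Fin m → ℝ) (S : Matrix (Fin m) (Fin d) ℝ) (Ξ : Fin d → ℝ)
    (A' : Matrix (Fin d) (Fin d) ℝ) (hA' : (-A').PosDef)
    (w : Fin d → ℝ) (K : Matrix (Fin m) (Fin m) ℝ) (hK : K.PosDef)
    (hHexp : (K - α • M + (α ^ 2) • (S * A'⁻¹ * Sᵀ)).PosDef) :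
    ∃ s : (Fin m → ℝ) × (Fin d → ℝ) × (Fin m → ℝ),
      (∀ (γ : Fin d → ℝ) (η : Fin m → ℝ),
          Gfun α M c S Ξ A' w K s.1 γ η ≤ Gfun α M c S Ξ A' w K s.1 s.2.1 s.2.2) ∧
      (∀ h : Fin m → ℝ,
          Gfun α M c S Ξ A' w K s.1 s.2.1 s.2.2 ≤ Gfun α M c S Ξ A' w K h s.2.1 s.2.2) ∧
      (∀ s' : (Fin m → ℝ) × (Fin d → ℝ) × (Fin m → ℝ),
          ((∀ (γ : Fin d → ℝ) (η : Fin m → ℝ),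
              Gfun α M c S Ξ A' w K s'.1 γ η ≤ Gfun α M c S Ξ A' w K s'.1 s'.2.1 s'.2.2) ∧
           (∀ h : Fin m → ℝ,
              Gfun α M c S Ξ A' w K s'.1 s'.2.1 s'.2.2 ≤ Gfun α M c S Ξ A' w K h s'.2.1 s'.2.2))
            → s' = s) ∧
      (⨅ h : Fin m → ℝ, ⨆ q : (Fin d → ℝ) × (Fin m → ℝ),
          Gfun α M c S Ξ A' w K h q.1 q.2) = Gfun α M c S Ξ A' w K s.1 s.2.1 s.2.2 ∧
      (⨆ q : (Fin d → ℝ) × (Fin m → ℝ), ⨅ h : Fin m → ℝ,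
          Gfun α M c S Ξ A' w K h q.1 q.2) = Gfun α M c S Ξ A' w K s.1 s.2.1 s.2.2 := by
  -- basic symmetry and invertibility facts
  have hMs : Mᵀ = M := pd_symm hM
  have hKs : Kᵀ = K := pd_symm hK
  have hA's : A'ᵀ = A' := by
    have := pd_symm hA'
    rwa [transpose_neg, neg_inj] at this
  have hA'det : IsUnit A'.det := by
    have h1 := pd_isunit_det hA'
    rw [det_neg] at h1
    exact (isUnit_of_mul_isUnit_right h1)
  have hA'c : ∀ y : Fin d → ℝ, A' *ᵥ (A'⁻¹ *ᵥ y) = y := by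
    intro y
    rw [mulVec_mulVec, mul_nonsing_inv _ hA'det, one_mulVec]
  have hA'negpsd : (-A').PosSemidef := hA'.posSemidef
  set Hexp : Matrix (Fin m) (Fin m) ℝ := K - α • M + (α ^ 2) • (S * A'⁻¹ * Sᵀ) with hHexpdef
  have hHexpc : ∀ y : Fin m → ℝ, Hexp *ᵥ (Hexp⁻¹ *ᵥ y) = y := mulVec_cancel hHexp
  set N : Matrix (Fin m) (Fin m) ℝ := M⁻¹ with hNdef
  have hN : N.PosDef := hM.inv
  have hMc : ∀ y : Fin m → ℝ, M *ᵥ (N *ᵥ y) = y := mulVec_cancel hM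
  have hNMc : ∀ y : Fin m → ℝ, N *ᵥ (M *ᵥ y) = y := by
    intro y
    rw [hNdef, mulVec_mulVec, nonsing_inv_mul _ (pd_isunit_det hM), one_mulVec]
  have hSNS : (α • (Sᵀ * N * S)).PosSemidef := by
    have h1 : (Sᵀ * N * (Sᵀ)ᴴ).PosSemidef := hN.posSemidef.mul_mul_conjTranspose_same Sᵀ
    rw [conjTranspose_eq_transpose_of_trivial, transpose_transpose] at h1
    exact psd_smul h1 hα.le
  set Gm : Matrix (Fin d) (Fin d) ℝ := α • (Sᵀ * N * S) - A' with hGmdef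
  have hGm : Gm.PosDef := by
    rw [hGmdef, sub_eq_add_neg]
    exact Matrix.PosDef.posSemidef_add hSNS hA'
  have hGmc : ∀ y : Fin d → ℝ, Gm *ᵥ (Gm⁻¹ *ᵥ y) = y := mulVec_cancel hGm
  -- the saddle point
  set γs : Fin d → ℝ := Gm⁻¹ *ᵥ (w + α • Ξ - α • (Sᵀ *ᵥ (N *ᵥ c))) with hγsdef
  set hs : Fin m → ℝ := N *ᵥ (c + S *ᵥ γs) with hhsdef
  -- first order conditions
  have hFOC1 : M *ᵥ hs - c - S *ᵥ γs = 0 := by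
    rw [hhsdef, hMc]; abel
  have hSTh : ∀ z : Fin d → ℝ, Sᵀ *ᵥ (N *ᵥ (c + S *ᵥ z))
      = Sᵀ *ᵥ (N *ᵥ c) + (Sᵀ * N * S) *ᵥ z := by
    intro z
    simp [mulVec_add, mulVec_mulVec, Matrix.mul_assoc]
  have hGmγs : α • ((Sᵀ * N * S) *ᵥ γs) - A' *ᵥ γs
      = w + α • Ξ - α • (Sᵀ *ᵥ (N *ᵥ c)) := by
    have h1 := hGmc (w + α • Ξ - α • (Sᵀ *ᵥ (N *ᵥ c)))
    rw [← hγsdef] at h1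
    rw [hGmdef] at h1
    rwa [sub_mulVec, smul_mulVec] at h1
  have hFOC2 : A' *ᵥ γs + w - α • (Sᵀ *ᵥ hs - Ξ) = 0 := by
    rw [hhsdef, hSTh γs]
    have h2 : A' *ᵥ γs = α • ((Sᵀ * N * S) *ᵥ γs) - (w + α • Ξ - α • (Sᵀ *ᵥ (N *ᵥ c))) := by
      rw [← hGmγs]; abel
    rw [h2, smul_sub, smul_add]
    abel
  -- the key quadratic bound (joint concavity in (γ, η))
  have L1 : ∀ (g : Fin d → ℝ) (e : Fin m → ℝ),
      (α / 2) * (e ⬝ᵥ M *ᵥ e) - α * (g ⬝ᵥ (Sᵀ *ᵥ e))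
        + (1 / 2 : ℝ) * (g ⬝ᵥ A' *ᵥ g) - (1 / 2 : ℝ) * (e ⬝ᵥ K *ᵥ e) ≤ 0 := by
    intro g e
    set gg : Fin d → ℝ := α • (A'⁻¹ *ᵥ (Sᵀ *ᵥ e)) with hgdef
    have hA'g : A' *ᵥ gg = α • (Sᵀ *ᵥ e) := by
      rw [hgdef, mulVec_smul, hA'c]
    have h1 : e ⬝ᵥ (Hexp *ᵥ e) = e ⬝ᵥ (K *ᵥ e) - α * (e ⬝ᵥ M *ᵥ e)
        + α ^ 2 * ((A'⁻¹ *ᵥ (Sᵀ *ᵥ e)) ⬝ᵥ (Sᵀ *ᵥ e)) := by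
      rw [hHexpdef]
      simp only [sub_mulVec, add_mulVec, smul_mulVec, dotProduct_sub, dotProduct_add,
        dotProduct_smul, smul_eq_mul]
      rw [← mulVec_mulVec, ← mulVec_mulVec, ← transpose_dot' S e (A'⁻¹ *ᵥ (Sᵀ *ᵥ e)),
        dotProduct_comm (Sᵀ *ᵥ e) (A'⁻¹ *ᵥ (Sᵀ *ᵥ e))]
    have hid : (α / 2) * (e ⬝ᵥ M *ᵥ e) - α * (g ⬝ᵥ (Sᵀ *ᵥ e))
        + (1 / 2 : ℝ) * (g ⬝ᵥ A' *ᵥ g) - (1 / 2 : ℝ) * (e ⬝ᵥ K *ᵥ e)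
        = (1 / 2 : ℝ) * ((g - gg) ⬝ᵥ (A' *ᵥ (g - gg))) - (1 / 2 : ℝ) * (e ⬝ᵥ (Hexp *ᵥ e)) := by
      rw [h1, mulVec_sub, dotProduct_sub, sub_dotProduct, sub_dotProduct,
        dot_symm' hA's gg g, hA'g, hgdef]
      simp only [dotProduct_smul, smul_dotProduct, smul_eq_mul]
      ring
    have t1 : (g - gg) ⬝ᵥ (A' *ᵥ (g - gg)) ≤ 0 := by
      have := psd_nonneg hA'negpsd (g - gg)
      rw [neg_mulVec, dotProduct_neg] at this
      linarith
    have t2 : 0 ≤ e ⬝ᵥ (Hexp *ᵥ e) := psd_nonneg hHexp.posSemidef e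
    rw [hid]
    linarith
  -- saddle inequality in (γ, η) at the saddle point
  have saddle1 : ∀ (γ : Fin d → ℝ) (η : Fin m → ℝ),
      Gfun α M c S Ξ A' w K hs γ η ≤ Gfun α M c S Ξ A' w K hs γs 0 := by
    intro γ η
    have key := G_expand α M c S Ξ A' w K hMs hA's hKs hs γs 0 0 (γ - γs) η
    have hγ : γs + (γ - γs) = γ := by abel
    rw [hγ] at key
    simp only [add_zero, zero_add] at key
    rw [hFOC1, hFOC2] at key
    simp only [smul_zero, dotProduct_zero, mulVec_zero, sub_zero, add_zero] at key
    have hq := L1 (γ - γs) η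
    rw [key]
    linarith
  -- saddle inequality in h at the saddle point
  have saddle2 : ∀ h : Fin m → ℝ,
      Gfun α M c S Ξ A' w K hs γs 0 ≤ Gfun α M c S Ξ A' w K h γs 0 := by
    intro h
    have key := G_expand α M c S Ξ A' w K hMs hA's hKs hs γs 0 (h - hs) 0 0
    have hh : hs + (h - hs) = h := by abel
    rw [hh] at key
    simp only [add_zero, zero_add, zero_dotProduct, dotProduct_zero, mulVec_zero,
      smul_zero, sub_zero, mul_zero] at key
    rw [hFOC1] at key
    simp only [smul_zero, dotProduct_zero, zero_add, add_zero] at key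
    have hq : 0 ≤ (h - hs) ⬝ᵥ M *ᵥ (h - hs) := psd_nonneg hM.posSemidef _
    rw [key]
    nlinarith
  -- explicit maximizer of G(h, ·, ·) for arbitrary h
  have hmaxpt : ∀ h : Fin m → ℝ, ∃ q : (Fin d → ℝ) × (Fin m → ℝ),
      ∀ (γ : Fin d → ℝ) (η : Fin m → ℝ),
        Gfun α M c S Ξ A' w K h γ η ≤ Gfun α M c S Ξ A' w K h q.1 q.2 := by
    intro h
    set ηh : Fin m → ℝ :=
      Hexp⁻¹ *ᵥ ((K - Hexp) *ᵥ h - α • c + α • (S *ᵥ (A'⁻¹ *ᵥ (α • Ξ + w)))) with hηhdef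
    set γh : Fin d → ℝ := A'⁻¹ *ᵥ (α • (Sᵀ *ᵥ (h + ηh)) - α • Ξ - w) with hγhdef
    have hR2 : A' *ᵥ γh + w - α • (Sᵀ *ᵥ (h + ηh) - Ξ) = 0 := by
      rw [hγhdef, hA'c, smul_sub]
      abel
    have hHηh : Hexp *ᵥ ηh
        = (K - Hexp) *ᵥ h - α • c + α • (S *ᵥ (A'⁻¹ *ᵥ (α • Ξ + w))) := by
      rw [hηhdef]; exact hHexpc _
    have hu : α • (S *ᵥ γh) = α ^ 2 • ((S * A'⁻¹ * Sᵀ) *ᵥ (h + ηh))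
        - α • (S *ᵥ (A'⁻¹ *ᵥ (α • Ξ + w))) := by
      rw [hγhdef]
      have habel : α • (Sᵀ *ᵥ (h + ηh)) - α • Ξ - w
          = α • (Sᵀ *ᵥ (h + ηh)) - (α • Ξ + w) := by abel
      rw [habel, mulVec_sub, mulVec_sub, mulVec_smul, mulVec_smul, smul_sub, smul_smul,
        ← sq, ← mulVec_mulVec, ← mulVec_mulVec]
    have hKH : α • (M *ᵥ (h + ηh)) - α ^ 2 • ((S * A'⁻¹ * Sᵀ) *ᵥ (h + ηh))
        = (K - Hexp) *ᵥ (h + ηh) := by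
      rw [hHexpdef]
      simp only [sub_mulVec, add_mulVec, smul_mulVec]
      abel
    have hR3 : α • (M *ᵥ (h + ηh) - c - S *ᵥ γh) = K *ᵥ ηh := by
      rw [smul_sub, smul_sub, hu]
      calc α • (M *ᵥ (h + ηh)) - α • c
            - (α ^ 2 • ((S * A'⁻¹ * Sᵀ) *ᵥ (h + ηh)) - α • (S *ᵥ (A'⁻¹ *ᵥ (α • Ξ + w))))
          = (α • (M *ᵥ (h + ηh)) - α ^ 2 • ((S * A'⁻¹ * Sᵀ) *ᵥ (h + ηh)))
            - α • c + α • (S *ᵥ (A'⁻¹ *ᵥ (α • Ξ + w))) := by abel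
        _ = (K - Hexp) *ᵥ (h + ηh) - α • c + α • (S *ᵥ (A'⁻¹ *ᵥ (α • Ξ + w))) := by rw [hKH]
        _ = (K - Hexp) *ᵥ h + (K *ᵥ ηh - Hexp *ᵥ ηh) - α • c
            + α • (S *ᵥ (A'⁻¹ *ᵥ (α • Ξ + w))) := by simp only [mulVec_add, sub_mulVec]
        _ = K *ᵥ ηh + ((K - Hexp) *ᵥ h - α • c + α • (S *ᵥ (A'⁻¹ *ᵥ (α • Ξ + w)))
            - Hexp *ᵥ ηh) := by abel
        _ = K *ᵥ ηh := by rw [← hHηh]; abel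
    refine ⟨⟨γh, ηh⟩, ?_⟩
    intro γ η
    have key := G_expand α M c S Ξ A' w K hMs hA's hKs h γh ηh 0 (γ - γh) (η - ηh)
    have hγ : γh + (γ - γh) = γ := by abel
    have hη : ηh + (η - ηh) = η := by abel
    rw [hγ, hη] at key
    simp only [add_zero, zero_add] at key
    rw [hR2, hR3] at key
    simp only [dotProduct_zero, add_zero] at key
    have hq := L1 (γ - γh) (η - ηh)
    rw [key]
    linarith
  -- explicit minimizer of G(·, γ, η) for arbitrary (γ, η)
  have hminpt : ∀ (γ : Fin d → ℝ) (η : Fin m → ℝ) (h' : Fin m → ℝ),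
      Gfun α M c S Ξ A' w K (N *ᵥ (c + S *ᵥ γ) - η) γ η ≤ Gfun α M c S Ξ A' w K h' γ η := by
    intro γ η h'
    set hh : Fin m → ℝ := N *ᵥ (c + S *ᵥ γ) - η with hhdef
    have key := G_expand α M c S Ξ A' w K hMs hA's hKs hh γ η (h' - hh) 0 0
    have h1 : hh + (h' - hh) = h' := by abel
    have h2 : hh + η = N *ᵥ (c + S *ᵥ γ) := by rw [hhdef]; abel
    rw [h1, h2] at key
    have h3 : M *ᵥ (N *ᵥ (c + S *ᵥ γ)) - c - S *ᵥ γ = 0 := by rw [hMc]; abel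
    rw [h3] at key
    simp only [add_zero, zero_add, zero_dotProduct, dotProduct_zero, mulVec_zero,
      smul_zero, sub_zero, mul_zero] at key
    have hq : 0 ≤ (h' - hh) ⬝ᵥ M *ᵥ (h' - hh) := psd_nonneg hM.posSemidef _
    rw [key]
    nlinarith
  refine ⟨⟨hs, γs, 0⟩, saddle1, saddle2, ?_, ?_, ?_⟩
  · -- uniqueness
    rintro ⟨h', γ', η'⟩ ⟨Hmax', Hmin'⟩
    simp only at Hmax' Hmin'
    set r : Fin m → ℝ := M *ᵥ (h' + η') - c - S *ᵥ γ' with hrdef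
    have hr : r = 0 := by
      have Hkey : ∀ t : ℝ, t * (-(α * (r ⬝ᵥ r))) + t ^ 2 * (-((α / 2) * (r ⬝ᵥ M *ᵥ r))) ≤ 0 := by
        intro t
        have key := G_expand α M c S Ξ A' w K hMs hA's hKs h' γ' η' (t • r) 0 0
        simp only [add_zero, zero_add, zero_dotProduct, dotProduct_zero, mulVec_zero,
          smul_zero, sub_zero, mul_zero] at key
        rw [← hrdef] at key
        have h1 := Hmin' (h' + t • r)
        rw [key] at h1
        simp only [smul_dotProduct, dotProduct_smul, mulVec_smul, smul_eq_mul] at h1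
        nlinarith
      have hb := linquad_zero _ _ Hkey
      have hz : r ⬝ᵥ r = 0 := by
        have : α * (r ⬝ᵥ r) = 0 := by linarith
        exact (mul_eq_zero.mp this).resolve_left hα.ne'
      exact dotProduct_self_eq_zero.mp hz
    set r2 : Fin d → ℝ := A' *ᵥ γ' + w - α • (Sᵀ *ᵥ (h' + η') - Ξ) with hr2def
    have hr2 : r2 = 0 := by
      have Hkey : ∀ t : ℝ, t * (r2 ⬝ᵥ r2) + t ^ 2 * ((1 / 2) * (r2 ⬝ᵥ A' *ᵥ r2)) ≤ 0 := by
        intro t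
        have key := G_expand α M c S Ξ A' w K hMs hA's hKs h' γ' η' 0 (t • r2) 0
        simp only [add_zero, zero_add, zero_dotProduct, dotProduct_zero, mulVec_zero,
          smul_zero, sub_zero, mul_zero] at key
        rw [← hr2def] at key
        have h1 := Hmax' (γ' + t • r2) η'
        rw [key] at h1
        simp only [smul_dotProduct, dotProduct_smul, mulVec_smul, smul_eq_mul] at h1
        nlinarith
      have hb := linquad_zero _ _ Hkey
      exact dotProduct_self_eq_zero.mp hb
    have hη' : η' = 0 := by
      set q : Fin m → ℝ := K *ᵥ η' with hqdef
      have Hkey : ∀ t : ℝ, t * (-(q ⬝ᵥ q))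
          + t ^ 2 * ((α / 2) * (q ⬝ᵥ M *ᵥ q) - (1 / 2) * (q ⬝ᵥ K *ᵥ q)) ≤ 0 := by
        intro t
        have key := G_expand α M c S Ξ A' w K hMs hA's hKs h' γ' η' 0 0 (t • q)
        simp only [add_zero, zero_add, zero_dotProduct, dotProduct_zero, mulVec_zero,
          smul_zero, sub_zero, mul_zero] at key
        rw [← hrdef, hr] at key
        simp only [smul_zero, dotProduct_zero, add_zero] at key
        rw [← hqdef] at key
        have h1 := Hmax' γ' (η' + t • q)
        rw [key] at h1
        simp only [smul_dotProduct, dotProduct_smul, mulVec_smul, smul_eq_mul] at h1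
        nlinarith
      have hb := linquad_zero _ _ Hkey
      have hz : q ⬝ᵥ q = 0 := by linarith
      have hq0 : q = 0 := dotProduct_self_eq_zero.mp hz
      apply mulVec_inj hK
      rw [mulVec_zero, ← hqdef, hq0]
    have hMh' : M *ᵥ h' = c + S *ᵥ γ' := by
      have h0 := hr
      rw [hrdef, hη', add_zero] at h0
      have h2 : M *ᵥ h' - (c + S *ᵥ γ') = 0 := by rw [← h0]; abel
      exact sub_eq_zero.mp h2
    have hh'N : h' = N *ᵥ (c + S *ᵥ γ') := by rw [← hMh', hNMc]
    have hγ'eq : γ' = γs := by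
      apply mulVec_inj hGm
      have h0 := hr2
      rw [hr2def, hη', add_zero, hh'N, hSTh γ'] at h0
      rw [smul_sub, smul_add] at h0
      have e3 : Gm *ᵥ γ' = w + α • Ξ - α • (Sᵀ *ᵥ (N *ᵥ c)) := by
        rw [hGmdef, sub_mulVec, smul_mulVec]
        rw [← sub_eq_zero]
        have e4 : α • ((Sᵀ * N * S) *ᵥ γ') - A' *ᵥ γ'
            - (w + α • Ξ - α • (Sᵀ *ᵥ (N *ᵥ c)))
            = -(A' *ᵥ γ' + w - (α • (Sᵀ *ᵥ (N *ᵥ c)) + α • ((Sᵀ * N * S) *ᵥ γ')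
              - α • Ξ)) := by abel
        rw [e4, h0, neg_zero]
      rw [e3, hγsdef, hGmc]
    have hh'eq : h' = hs := by
      rw [hh'N, hγ'eq]
    rw [hh'eq, hγ'eq, hη']
  · -- inf-sup equality
    have hBA : ∀ h : Fin m → ℝ, BddAbove (Set.range fun q : (Fin d → ℝ) × (Fin m → ℝ) =>
        Gfun α M c S Ξ A' w K h q.1 q.2) := by
      intro h
      obtain ⟨q0, hq0⟩ := hmaxpt h
      exact ⟨Gfun α M c S Ξ A' w K h q0.1 q0.2, by rintro y ⟨q, rfl⟩; exact hq0 q.1 q.2⟩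
    have hlow : ∀ h : Fin m → ℝ, Gfun α M c S Ξ A' w K hs γs 0
        ≤ ⨆ q : (Fin d → ℝ) × (Fin m → ℝ), Gfun α M c S Ξ A' w K h q.1 q.2 := by
      intro h
      exact le_ciSup_of_le (hBA h) (⟨γs, 0⟩ : (Fin d → ℝ) × (Fin m → ℝ)) (saddle2 h)
    have hsupstar : (⨆ q : (Fin d → ℝ) × (Fin m → ℝ), Gfun α M c S Ξ A' w K hs q.1 q.2)
        = Gfun α M c S Ξ A' w K hs γs 0 := by
      apply le_antisymm
      · exact ciSup_le fun q => saddle1 q.1 q.2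
      · exact le_ciSup_of_le (hBA hs) (⟨γs, 0⟩ : (Fin d → ℝ) × (Fin m → ℝ)) le_rfl
    apply le_antisymm
    · exact (ciInf_le ⟨Gfun α M c S Ξ A' w K hs γs 0,
        by rintro y ⟨h, rfl⟩; exact hlow h⟩ hs).trans hsupstar.le
    · exact le_ciInf hlow
  · -- sup-inf equality
    have hBB : ∀ q : (Fin d → ℝ) × (Fin m → ℝ), BddBelow (Set.range fun h : Fin m → ℝ =>
        Gfun α M c S Ξ A' w K h q.1 q.2) := fun q =>
      ⟨Gfun α M c S Ξ A' w K (N *ᵥ (c + S *ᵥ q.1) - q.2) q.1 q.2, by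
        rintro y ⟨h', rfl⟩; exact hminpt q.1 q.2 h'⟩
    have hup : ∀ q : (Fin d → ℝ) × (Fin m → ℝ),
        (⨅ h : Fin m → ℝ, Gfun α M c S Ξ A' w K h q.1 q.2)
          ≤ Gfun α M c S Ξ A' w K hs γs 0 :=
      fun q => (ciInf_le (hBB q) hs).trans (saddle1 q.1 q.2)
    have hinfstar : (⨅ h : Fin m → ℝ, Gfun α M c S Ξ A' w K h γs (0 : Fin m → ℝ))
        = Gfun α M c S Ξ A' w K hs γs 0 :=
      le_antisymm (ciInf_le (hBB ⟨γs, 0⟩) hs) (le_ciInf saddle2)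
    apply le_antisymm
    · exact ciSup_le hup
    · exact le_ciSup_of_le ⟨Gfun α M c S Ξ A' w K hs γs 0,
        by rintro y ⟨q, rfl⟩; exact hup q⟩ (⟨γs, 0⟩ : (Fin d → ℝ) × (Fin m → ℝ)) hinfstar.ge


end main

/-- Existence of a unique saddle point of `F` and the minimax equality, under the
no-redundant-assets condition, `𝒜 ≺ 0`, and the exploration-covariance bound
`Ψ⁻¹ − θΔt·Σ(I_d − θ𝒜⁻¹)Σᵀ ≻ 0`. -/
theorem F_saddle_point_and_minimax {m n d : ℕ} (θ Δt : ℝ) (hθ : 0 < θ) (hΔt : 0 < Δt)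
    (S : Matrix (Fin m) (Fin d) ℝ) (hS : (S * Sᵀ).PosDef)
    (A : Matrix (Fin m) (Fin n) ℝ) (a : Fin m → ℝ) (Ξ : Fin d → ℝ)
    (Λ : Matrix (Fin n) (Fin d) ℝ) (b : Fin n → ℝ) (Bt : Matrix (Fin n) (Fin n) ℝ)
    (P : Matrix (Fin n) (Fin n) ℝ) (hP : P.IsSymm) (p : Fin n → ℝ)
    (Ψ : Matrix (Fin m) (Fin m) ℝ) (hΨ : Ψ.PosDef) (x : Fin n → ℝ)
    (h𝒜 : (-(Δt • (Λᵀ * P * Λ) - (1 : Matrix (Fin d) (Fin d) ℝ))).PosDef)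
    (hexp : (Ψ⁻¹ - (θ * Δt) •
        (S * ((1 : Matrix (Fin d) (Fin d) ℝ)
              - θ • (Δt • (Λᵀ * P * Λ) - (1 : Matrix (Fin d) (Fin d) ℝ))⁻¹) * Sᵀ)).PosDef) :
    ∃ s : (Fin m → ℝ) × (Fin d → ℝ) × (Fin m → ℝ),
      (∀ (γ : Fin d → ℝ) (η : Fin m → ℝ),
          FFun θ Δt S A a Ξ Λ b Bt P p Ψ x s.1 γ η
            ≤ FFun θ Δt S A a Ξ Λ b Bt P p Ψ x s.1 s.2.1 s.2.2) ∧
      (∀ h : Fin m → ℝ,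
          FFun θ Δt S A a Ξ Λ b Bt P p Ψ x s.1 s.2.1 s.2.2
            ≤ FFun θ Δt S A a Ξ Λ b Bt P p Ψ x h s.2.1 s.2.2) ∧
      (∀ s' : (Fin m → ℝ) × (Fin d → ℝ) × (Fin m → ℝ),
          ((∀ (γ : Fin d → ℝ) (η : Fin m → ℝ),
              FFun θ Δt S A a Ξ Λ b Bt P p Ψ x s'.1 γ η
                ≤ FFun θ Δt S A a Ξ Λ b Bt P p Ψ x s'.1 s'.2.1 s'.2.2) ∧
           (∀ h : Fin m → ℝ,
              FFun θ Δt S A a Ξ Λ b Bt P p Ψ x s'.1 s'.2.1 s'.2.2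
                ≤ FFun θ Δt S A a Ξ Λ b Bt P p Ψ x h s'.2.1 s'.2.2)) → s' = s) ∧
      (⨅ h : Fin m → ℝ, ⨆ q : (Fin d → ℝ) × (Fin m → ℝ),
          FFun θ Δt S A a Ξ Λ b Bt P p Ψ x h q.1 q.2)
        = FFun θ Δt S A a Ξ Λ b Bt P p Ψ x s.1 s.2.1 s.2.2 ∧
      (⨆ q : (Fin d → ℝ) × (Fin m → ℝ), ⨅ h : Fin m → ℝ,
          FFun θ Δt S A a Ξ Λ b Bt P p Ψ x h q.1 q.2)
        = FFun θ Δt S A a Ξ Λ b Bt P p Ψ x s.1 s.2.1 s.2.2 := by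
  set 𝒜 : Matrix (Fin d) (Fin d) ℝ := Δt • (Λᵀ * P * Λ) - 1 with h𝒜def
  set v : Fin n → ℝ := P *ᵥ (Δt • b + Bt *ᵥ x) + p with hvdef
  have hF : FFun θ Δt S A a Ξ Λ b Bt P p Ψ x
      = Gfun (θ * Δt) (S * Sᵀ) (a + A *ᵥ x) S Ξ (Δt • 𝒜) (Δt • (Λᵀ *ᵥ v)) Ψ⁻¹ := by
    funext h γ η
    simp only [FFun, Gfun, h𝒜def, hvdef, smul_mulVec, dotProduct_smul, smul_eq_mul]
    ring
  have hα : 0 < θ * Δt := mul_pos hθ hΔt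
  have hA'G : (-(Δt • 𝒜)).PosDef := by
    have := pd_smul h𝒜 hΔt
    rwa [smul_neg] at this
  have h𝒜det : IsUnit 𝒜.det := by
    have h1 := pd_isunit_det h𝒜
    rw [det_neg] at h1
    exact isUnit_of_mul_isUnit_right h1
  have h𝒜inv : (Δt • 𝒜)⁻¹ = Δt⁻¹ • 𝒜⁻¹ := by
    apply Matrix.inv_eq_left_inv
    rw [Matrix.smul_mul, Matrix.mul_smul, smul_smul, inv_mul_cancel₀ hΔt.ne',
      nonsing_inv_mul _ h𝒜det, one_smul]
  have hmat : S * ((1 : Matrix (Fin d) (Fin d) ℝ) - θ • 𝒜⁻¹) * Sᵀ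
      = S * Sᵀ - θ • (S * 𝒜⁻¹ * Sᵀ) := by
    rw [Matrix.mul_sub, Matrix.mul_one, Matrix.sub_mul, Matrix.mul_smul, Matrix.smul_mul]
  have key : Ψ⁻¹ - (θ * Δt) • (S * Sᵀ) + (θ * Δt) ^ 2 • (S * (Δt • 𝒜)⁻¹ * Sᵀ)
      = Ψ⁻¹ - (θ * Δt) • (S * ((1 : Matrix (Fin d) (Fin d) ℝ) - θ • 𝒜⁻¹) * Sᵀ) := by
    rw [hmat, h𝒜inv, Matrix.mul_smul, Matrix.smul_mul, smul_smul, smul_sub, smul_smul]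
    have hscal : (θ * Δt) ^ 2 * Δt⁻¹ = θ * Δt * θ := by
      field_simp
    rw [hscal]
    abel
  have hHexpG : (Ψ⁻¹ - (θ * Δt) • (S * Sᵀ)
      + (θ * Δt) ^ 2 • (S * (Δt • 𝒜)⁻¹ * Sᵀ)).PosDef := by
    rw [key]
    exact hexp
  obtain ⟨s, H1, H2, H3, H4, H5⟩ := Gsaddle (θ * Δt) hα (S * Sᵀ) hS (a + A *ᵥ x) S Ξ
    (Δt • 𝒜) hA'G (Δt • (Λᵀ *ᵥ v)) Ψ⁻¹ hΨ.inv hHexpG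
  rw [hF]
  exact ⟨s, H1, H2, H3, H4, H5⟩
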